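/- Let (X,d) be a ν-generalized metric space with ν odd, and let {x_n} be a ν-Cauchy sequence whose terms are pairwise distinct. Then {x_n} is Cauchy. -/
import Mathlib


open Filter Topology

/-- `(X,d)` is a ν-generalized metric space. -/
def NuGenMetric (ν : ℕ) {X : Type*} (d : X → X → ℝ) : Prop :=
  (∀ x y, 0 ≤ d x y) ∧
  (∀ x y, d x y = 0 ↔ x = y) ∧
  (∀ x y, d x y = d y x) ∧
  (∀ u : Fin (ν + 2) → X, Function.Injective u →
    d (u 0) (u (Fin.last (ν + 1))) ≤ ∑ i : Fin (ν + 1), d (u i.castSucc) (u i.succ))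

/-- `{x n}` is `k`-Cauchy: `lim_n sup_m d(x_n, x_{n+1+mk}) = 0` (sup taken in `[0,∞]`). -/
def IsKCauchy {X : Type*} (d : X → X → ℝ) (x : ℕ → X) (k : ℕ) : Prop :=
  Filter.Tendsto (fun n => ⨆ m : ℕ, ENNReal.ofReal (d (x n) (x (n + 1 + m * k))))
    Filter.atTop (nhds 0)

lemma exists_pqt (ν j : ℕ) (hν : Odd ν) :
    ∃ p q t : ℕ, 1 ≤ p ∧ 1 ≤ q ∧ p + q = ν + 1 ∧ p + t * ν = j + q := by
  obtain ⟨c, hc⟩ := hν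
  have hdm : ν * (j / ν) + j % ν = j := Nat.div_add_mod j ν
  have hlt : j % ν < ν := Nat.mod_lt j (by omega)
  rcases Nat.even_or_odd (j % ν) with ⟨s, hs⟩ | ⟨s, hs⟩
  · exact ⟨c + 1 + s, c + 1 - s, j / ν, by omega, by omega, by omega, by
      have h1 : (j / ν) * ν = ν * (j / ν) := Nat.mul_comm _ _
      have hsc : s ≤ c := by omega
      omega⟩
  · exact ⟨s + 1, 2 * c + 1 - s, j / ν + 1, by omega, by omega, by omega, by
      have h1 : (j / ν + 1) * ν = ν * (j / ν) + ν := by ring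
      have hsc : s ≤ c := by omega
      omega⟩

lemma key {X : Type*} (ν : ℕ) (hν : Odd ν) (d : X → X → ℝ)
    (hX : NuGenMetric ν d) (x : ℕ → X) (hinj : Function.Injective x) (N : ℕ) (ε : ℝ)
    (h : ∀ b, N ≤ b → ∀ m : ℕ, d (x b) (x (b + 1 + m * ν)) ≤ ε)
    (n : ℕ) (hn : N ≤ n) (j : ℕ) (hj : 1 ≤ j) :
    d (x n) (x (n + j)) ≤ ((ν : ℝ) + 1) * ε := by
  have hν1 : 1 ≤ ν := hν.pos
  obtain ⟨p, q, t, hp, hq, hpq, hbal⟩ := exists_pqt ν j hν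
  set K := t + p + q + j + ν + 2 with hK
  set B := n + 1 + K * ν with hB
  set a : ℕ → ℕ := fun i =>
    if i = 0 then n else if i ≤ p then B + (i - 1) else n + j + (ν + 1 - i) * (1 + ν) with ha
  have hpν : p ≤ ν := by omega
  have ha0 : a 0 = n := by simp [ha]
  have hap : ∀ i, 1 ≤ i → i ≤ p → a i = B + (i - 1) := by
    intro i h1 h2
    simp only [ha]
    rw [if_neg (by omega), if_pos h2]
  have had : ∀ i, p < i → a i = n + j + (ν + 1 - i) * (1 + ν) := by
    intro i h1
    simp only [ha]
    rw [if_neg (by omega), if_neg (by omega)]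
  have haLast : a (ν + 1) = n + j := by rw [had (ν + 1) (by omega)]; simp
  have hKν : K * ν = t*ν + p*ν + q*ν + j*ν + ν*ν + 2*ν := by rw [hK]; ring
  have hjν : j ≤ j * ν := Nat.le_mul_of_pos_right j (by omega)
  -- descending part values are < B and ≥ n + j
  have hsep : ∀ i, p < i → i ≤ ν + 1 → n + j ≤ a i ∧ a i < B := by
    intro i hi hi2
    rw [had i hi, hB]
    obtain ⟨w, hw⟩ : ∃ w, ν + 1 - i = w := ⟨_, rfl⟩
    have hwν : w ≤ ν := by omega
    rw [hw]
    have e1 : w * (1 + ν) = w + w * ν := by ring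
    have e2 : w * ν ≤ ν * ν := Nat.mul_le_mul_right ν hwν
    omega
  -- injectivity of a on [0, ν+1]
  have ainj : ∀ i₁ i₂, i₁ ≤ ν + 1 → i₂ ≤ ν + 1 → a i₁ = a i₂ → i₁ = i₂ := by
    have main : ∀ i₁ i₂, i₁ < i₂ → i₂ ≤ ν + 1 → a i₁ ≠ a i₂ := by
      intro i₁ i₂ hlt2 h2
      rcases Nat.eq_zero_or_pos i₁ with h0 | h0₁
      · subst h0
        rw [ha0]
        rcases le_or_gt i₂ p with hc2 | hc2
        · rw [hap i₂ (by omega) hc2]; omega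
        · have := hsep i₂ hc2 h2; omega
      · rcases le_or_gt i₁ p with hc1 | hc1
        · rw [hap i₁ h0₁ hc1]
          rcases le_or_gt i₂ p with hc2 | hc2
          · rw [hap i₂ (by omega) hc2]; omega
          · have h3 := hsep i₂ hc2 h2
            have h4 : B ≤ B + (i₁ - 1) := Nat.le_add_right _ _
            omega
        · rw [had i₁ hc1, had i₂ (by omega)]
          obtain ⟨w₁, hw₁⟩ : ∃ w, ν + 1 - i₁ = w := ⟨_, rfl⟩
          obtain ⟨w₂, hw₂⟩ : ∃ w, ν + 1 - i₂ = w := ⟨_, rfl⟩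
          rw [hw₁, hw₂]
          have hmul : w₂ * (1 + ν) < w₁ * (1 + ν) :=
            Nat.mul_lt_mul_of_lt_of_le (by omega) le_rfl (by omega)
          omega
    intro i₁ i₂ h1 h2 heq
    rcases Nat.lt_trichotomy i₁ i₂ with hc | hc | hc
    · exact absurd heq (main _ _ hc h2)
    · exact hc
    · exact absurd heq.symm (main _ _ hc h1)
  -- each edge of the path has controlled length
  have edge : ∀ i : ℕ, i ≤ ν →
      ∃ b m, N ≤ b ∧ ((a i = b ∧ a (i + 1) = b + 1 + m * ν) ∨
        (a (i + 1) = b ∧ a i = b + 1 + m * ν)) := by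
    intro i hi
    rcases Nat.eq_zero_or_pos i with h0 | h0
    · subst h0
      refine ⟨n, K, hn, Or.inl ⟨ha0, ?_⟩⟩
      rw [hap 1 le_rfl hp, hB]
      omega
    · rcases Nat.lt_or_ge i p with hc | hc
      · -- ascending unit step
        refine ⟨B + (i - 1), 0, by omega, Or.inl ⟨hap i h0 (by omega), ?_⟩⟩
        rw [hap (i + 1) (by omega) (by omega)]
        omega
      · rcases Nat.eq_or_lt_of_le hc with hc' | hc'
        · -- the big descent step, i = p
          subst hc'
          refine ⟨a (p + 1), p + j + ν + 3, ?_, Or.inr ⟨rfl, ?_⟩⟩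
          · have := hsep (p + 1) (by omega) (by omega); omega
          · obtain ⟨Q, hQ⟩ : ∃ Q, q = Q + 1 := ⟨q - 1, by omega⟩
            have e0 : ν + 1 - (p + 1) = Q := by omega
            rw [hap p hp le_rfl, had (p + 1) (by omega), hB, e0]
            have e1 : Q * (1 + ν) = Q + Q * ν := by ring
            have e2 : (p + j + ν + 3) * ν = p*ν + j*ν + ν*ν + 3*ν := by ring
            have e3 : q * ν = Q * ν + ν := by rw [hQ]; ring
            omega
        · -- descending (1+ν) steps
          refine ⟨a (i + 1), 1, ?_, Or.inr ⟨rfl, ?_⟩⟩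
          · have := hsep (i + 1) (by omega) (by omega); omega
          · rw [had (i + 1) (by omega), had i (by omega)]
            obtain ⟨w, hw⟩ : ∃ w, ν + 1 - (i + 1) = w := ⟨_, rfl⟩
            have e : ν + 1 - i = w + 1 := by omega
            rw [e, hw]
            ring
  -- apply the polygon inequality
  set u : Fin (ν + 2) → X := fun i => x (a i.val) with hu
  have uinj : Function.Injective u := by
    intro i₁ i₂ hueq
    have := hinj hueq
    exact Fin.ext (ainj _ _ (Nat.lt_succ_iff.mp i₁.isLt) (Nat.lt_succ_iff.mp i₂.isLt) this)
  have tri := hX.2.2.2 u uinj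
  have hu0 : u 0 = x n := by rw [hu]; simp [ha0]
  have hulast : u (Fin.last (ν + 1)) = x (n + j) := by
    rw [hu]; simp only [Fin.val_last]; rw [haLast]
  rw [hu0, hulast] at tri
  refine tri.trans ?_
  have hsum : ∀ i : Fin (ν + 1), d (u i.castSucc) (u i.succ) ≤ ε := by
    intro i
    obtain ⟨b, m, hbN, hcase⟩ := edge i.val (Nat.lt_succ_iff.mp i.isLt)
    rcases hcase with ⟨e1, e2⟩ | ⟨e1, e2⟩
    · have heq : d (u i.castSucc) (u i.succ) = d (x b) (x (b + 1 + m * ν)) := by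
        rw [hu]
        simp only [Fin.coe_castSucc, Fin.val_succ, e1, e2]
      rw [heq]; exact h b hbN m
    · have heq : d (u i.castSucc) (u i.succ) = d (x (b + 1 + m * ν)) (x b) := by
        rw [hu]
        simp only [Fin.coe_castSucc, Fin.val_succ, e1, e2]
      rw [heq, hX.2.2.1]
      exact h b hbN m
  calc ∑ i : Fin (ν + 1), d (u i.castSucc) (u i.succ)
      ≤ ∑ _i : Fin (ν + 1), ε := Finset.sum_le_sum (fun i _ => hsum i)
    _ = ((ν : ℝ) + 1) * ε := by
        rw [Finset.sum_const, Finset.card_univ, Fintype.card_fin, nsmul_eq_mul]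
        push_cast
        ring

theorem stmt_14 {X : Type*} (ν : ℕ) (hν : Odd ν) (d : X → X → ℝ)
    (hX : NuGenMetric ν d) (x : ℕ → X) (hinj : Function.Injective x)
    (hC : IsKCauchy d x ν) : IsKCauchy d x 1 := by
  rw [IsKCauchy, ENNReal.tendsto_nhds_zero] at hC ⊢
  intro ε hε
  set ε' := min ε 1 with hε'
  have hε'0 : 0 < ε' := lt_min hε zero_lt_one
  have hε't : ε' ≠ ⊤ := ne_top_of_le_ne_top ENNReal.one_ne_top (min_le_right _ _)
  set δ := ε'.toReal / ((ν : ℝ) + 1) with hδdef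
  have hδ : 0 < δ := div_pos (ENNReal.toReal_pos hε'0.ne' hε't) (by positivity)
  have h2 := hC (ENNReal.ofReal δ) (ENNReal.ofReal_pos.mpr hδ)
  rw [eventually_atTop] at h2
  obtain ⟨N, hN⟩ := h2
  have hd : ∀ b, N ≤ b → ∀ m : ℕ, d (x b) (x (b + 1 + m * ν)) ≤ δ := by
    intro b hb m
    have h3 : ENNReal.ofReal (d (x b) (x (b + 1 + m * ν))) ≤ ENNReal.ofReal δ :=
      le_trans (le_iSup (fun m => ENNReal.ofReal (d (x b) (x (b + 1 + m * ν)))) m) (hN b hb)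
    exact (ENNReal.ofReal_le_ofReal_iff hδ.le).mp h3
  rw [eventually_atTop]
  refine ⟨N, fun n hn => ?_⟩
  refine iSup_le fun m => ?_
  have hkey := key ν hν d hX x hinj N δ hd n hn (1 + m) (by omega)
  have harg : n + (1 + m) = n + 1 + m * 1 := by ring
  rw [harg] at hkey
  calc ENNReal.ofReal (d (x n) (x (n + 1 + m * 1)))
      ≤ ENNReal.ofReal (((ν : ℝ) + 1) * δ) := ENNReal.ofReal_le_ofReal hkey
    _ = ε' := by
        rw [hδdef, mul_div_cancel₀ _ (by positivity : ((ν : ℝ) + 1) ≠ 0)]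
        exact ENNReal.ofReal_toReal hε't
    _ ≤ ε := min_le_left _ _
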